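/- Let (A_N)_{N∈ℕ} be a sequence of C*-algebras and T_N : C(M) → A_N unital positive (hence norm-contracting) linear maps with each T_N surjective onto A_N in the sense that the images generate. Suppose for all f, g ∈ C(M), ‖T_N(f)T_N(g) − T_N(fg)‖ → 0 as N → ∞. Then the set A := Im T + ⊕_N A_N (where T is the direct product of the T_N inside ∏_N A_N and ⊕ is the c₀-direct sum) is a C*-subalgebra of ∏_N A_N. -/

import Mathlib

open scoped ENNReal

set_option maxHeartbeats 1000000
set_option synthInstance.maxHeartbeats 1000000

namespace ToeplitzAux

variable (A : ℕ → Type*) [∀ N, NormedRing (A N)] [∀ N, StarRing (A N)]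
    [∀ N, CStarRing (A N)] [∀ N, NormedAlgebra ℂ (A N)] [∀ N, CompleteSpace (A N)]
    [∀ N, StarModule ℂ (A N)] [∀ N, NormOneClass (A N)]

/-- The c₀ direct sum inside the ℓ∞ product, as a submodule. -/
noncomputable def c0 : Submodule ℂ (lp A ∞) where
  carrier := {x | Filter.Tendsto (fun N => ‖(x : ∀ N, A N) N‖) Filter.atTop (nhds 0)}
  add_mem' {x y} hx hy := by
    refine squeeze_zero (fun N => norm_nonneg _) (g := fun N => ‖(x : ∀ N, A N) N‖ + ‖(y : ∀ N, A N) N‖) (fun N => ?_) (by simpa using hx.add hy)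
    have : ((x + y : lp A ∞) : ∀ N, A N) N = (x : ∀ N, A N) N + (y : ∀ N, A N) N := by
      rw [lp.coeFn_add]; rfl
    rw [this]; exact norm_add_le _ _
  zero_mem' := by
    simp only [Set.mem_setOf_eq, lp.coeFn_zero, Pi.zero_apply, norm_zero]
    exact tendsto_const_nhds
  smul_mem' c x hx := by
    refine squeeze_zero (fun N => norm_nonneg _) (g := fun N => ‖c‖ * ‖(x : ∀ N, A N) N‖) (fun N => ?_) (by simpa using hx.const_mul ‖c‖)
    have : ((c • x : lp A ∞) : ∀ N, A N) N = c • (x : ∀ N, A N) N := by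
      rw [lp.coeFn_smul]; rfl
    rw [this]
    exact (norm_smul_le _ _)

variable {A}

lemma mem_c0_iff {x : lp A ∞} :
    x ∈ c0 A ↔ Filter.Tendsto (fun N => ‖(x : ∀ N, A N) N‖) Filter.atTop (nhds 0) := Iff.rfl

lemma mem_c0_of_le {x : lp A ∞} {g : ℕ → ℝ}
    (hg : Filter.Tendsto g Filter.atTop (nhds 0))
    (h : ∀ N, ‖(x : ∀ N, A N) N‖ ≤ g N) : x ∈ c0 A :=
  squeeze_zero (fun N => norm_nonneg _) h hg

lemma mul_mem_c0_left (z : lp A ∞) {x : lp A ∞} (hx : x ∈ c0 A) : z * x ∈ c0 A := by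
  refine mem_c0_of_le (g := fun N => ‖z‖ * ‖(x : ∀ N, A N) N‖) (by simpa using hx.const_mul ‖z‖)
    (fun N => ?_)
  have : ((z * x : lp A ∞) : ∀ N, A N) N = (z : ∀ N, A N) N * (x : ∀ N, A N) N :=
    congrFun (lp.infty_coeFn_mul z x) N
  rw [this]
  exact (norm_mul_le _ _).trans
    (mul_le_mul_of_nonneg_right (lp.norm_apply_le_norm ENNReal.top_ne_zero z N) (norm_nonneg _))

lemma mul_mem_c0_right (z : lp A ∞) {x : lp A ∞} (hx : x ∈ c0 A) : x * z ∈ c0 A := by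
  refine mem_c0_of_le (g := fun N => ‖(x : ∀ N, A N) N‖ * ‖z‖) (by simpa using hx.mul_const ‖z‖)
    (fun N => ?_)
  have : ((x * z : lp A ∞) : ∀ N, A N) N = (x : ∀ N, A N) N * (z : ∀ N, A N) N :=
    congrFun (lp.infty_coeFn_mul x z) N
  rw [this]
  exact (norm_mul_le _ _).trans
    (mul_le_mul_of_nonneg_left (lp.norm_apply_le_norm ENNReal.top_ne_zero z N) (norm_nonneg _))

lemma star_mem_c0 {x : lp A ∞} (hx : x ∈ c0 A) : star x ∈ c0 A := by
  refine mem_c0_of_le (g := fun N => ‖(x : ∀ N, A N) N‖) hx (fun N => ?_)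
  have : ((star x : lp A ∞) : ∀ N, A N) N = star ((x : ∀ N, A N) N) := lp.star_apply x N
  rw [this, norm_star]

lemma c0_isClosed : IsClosed ((c0 A : Submodule ℂ (lp A ∞)) : Set (lp A ∞)) := by
  refine isClosed_of_closure_subset fun x hx => ?_
  rw [SetLike.mem_coe, mem_c0_iff, Metric.tendsto_atTop]
  intro ε hε
  obtain ⟨y, hy, hxy⟩ := Metric.mem_closure_iff.mp hx (ε / 3) (by linarith)
  rw [SetLike.mem_coe, mem_c0_iff, Metric.tendsto_atTop] at hy
  obtain ⟨n, hn⟩ := hy (ε / 3) (by linarith)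
  refine ⟨n, fun N hN => ?_⟩
  have h1 : ‖(x : ∀ N, A N) N - (y : ∀ N, A N) N‖ ≤ ‖x - y‖ := by
    have : ((x - y : lp A ∞) : ∀ N, A N) N = (x : ∀ N, A N) N - (y : ∀ N, A N) N := by
      rw [lp.coeFn_sub]; rfl
    rw [← this]
    exact lp.norm_apply_le_norm ENNReal.top_ne_zero _ N
  have h2 := hn N hN
  rw [Real.dist_eq, sub_zero, abs_of_nonneg (norm_nonneg _)] at h2
  rw [dist_eq_norm] at hxy
  have h3 : ‖(x : ∀ N, A N) N‖ ≤ ‖(x : ∀ N, A N) N - (y : ∀ N, A N) N‖ + ‖(y : ∀ N, A N) N‖ := by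
    simpa using norm_add_le ((x : ∀ N, A N) N - (y : ∀ N, A N) N) ((y : ∀ N, A N) N)
  rw [Real.dist_eq, sub_zero, abs_of_nonneg (norm_nonneg _)]
  linarith

instance : IsClosed ((c0 A : Submodule ℂ (lp A ∞)) : Set (lp A ∞)) := c0_isClosed

variable (A) in
/-- The quotient "Calkin-type" algebra `∏ A_N / ⊕ A_N`. -/
abbrev Q := lp A ∞ ⧸ (c0 A)

/-- Abbreviation for the quotient map. -/
noncomputable abbrev qmk (x : lp A ∞) : Q A := Submodule.Quotient.mk x

lemma qmk_sub_mem {x y : lp A ∞} (h : x - y ∈ c0 A) : qmk x = qmk y :=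
  (Submodule.Quotient.eq _).mpr h

/-- Norm of element of the quotient is at most any eventual bound on component norms. -/
lemma qmk_norm_le_of_eventually {x : lp A ∞} {c : ℝ} (hc : 0 ≤ c)
    (h : ∀ᶠ N in Filter.atTop, ‖(x : ∀ N, A N) N‖ ≤ c) : ‖qmk x‖ ≤ c := by
  obtain ⟨n, hn⟩ := Filter.eventually_atTop.mp h
  classical
  -- truncation of x below n
  have hmem : Memℓp (fun N => if N < n then (x : ∀ N, A N) N else 0) ∞ := by
    rw [memℓp_infty_iff]
    refine ⟨‖x‖, ?_⟩
    rintro - ⟨N, rfl⟩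
    dsimp only
    split_ifs
    · exact lp.norm_apply_le_norm ENNReal.top_ne_zero x N
    · simpa using norm_nonneg x
  set t : lp A ∞ := ⟨fun N => if N < n then (x : ∀ N, A N) N else 0, hmem⟩ with ht
  have htc : (t : ∀ N, A N) = fun N => if N < n then (x : ∀ N, A N) N else 0 := rfl
  have htmem : t ∈ c0 A := by
    rw [mem_c0_iff]
    refine squeeze_zero (fun N => norm_nonneg _) (g := fun N => if N < n then ‖x‖ else 0) ?_ ?_
    · intro N
      rw [htc]
      dsimp only
      split_ifs
      · exact lp.norm_apply_le_norm ENNReal.top_ne_zero x N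
      · simp
    · rw [Filter.tendsto_atTop']
      intro s hs
      exact ⟨n, fun N hN => by simpa [Nat.not_lt.mpr hN] using mem_of_mem_nhds hs⟩
  have hxt : qmk x = qmk (x - t) := by
    refine qmk_sub_mem ?_
    simpa using htmem
  refine le_trans (le_of_eq (congrArg norm hxt)) ?_
  refine le_trans (Submodule.Quotient.norm_mk_le (c0 A) (x - t)) ?_
  refine lp.norm_le_of_forall_le hc fun N => ?_
  have hcoe : ((x - t : lp A ∞) : ∀ N, A N) N = (x : ∀ N, A N) N - (t : ∀ N, A N) N := by
    rw [lp.coeFn_sub]; rfl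
  rw [hcoe, htc]
  dsimp only
  split_ifs with hlt
  · simpa using hc
  · rw [sub_zero]
    exact hn N (Nat.not_lt.mp hlt)

/-- Eventually, component norms are bounded by the quotient norm plus epsilon. -/
lemma eventually_norm_le_qmk (x : lp A ∞) {ε : ℝ} (hε : 0 < ε) :
    ∀ᶠ N in Filter.atTop, ‖(x : ∀ N, A N) N‖ ≤ ‖qmk x‖ + ε := by
  obtain ⟨m, hm, hmn⟩ := Submodule.Quotient.norm_mk_lt (S := c0 A) (qmk x) (half_pos hε)
  have hxm : x - m ∈ c0 A := (Submodule.Quotient.eq _).mp hm.symm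
  rw [mem_c0_iff, Metric.tendsto_atTop] at hxm
  obtain ⟨n, hn⟩ := hxm (ε / 2) (half_pos hε)
  rw [Filter.eventually_atTop]
  refine ⟨n, fun N hN => ?_⟩
  have h1 := hn N hN
  rw [Real.dist_eq, sub_zero, abs_of_nonneg (norm_nonneg _)] at h1
  have h2 : ‖(m : ∀ N, A N) N‖ ≤ ‖m‖ := lp.norm_apply_le_norm ENNReal.top_ne_zero m N
  have h3 : ‖(x : ∀ N, A N) N‖ ≤ ‖(m : ∀ N, A N) N‖ + ‖((x - m : lp A ∞) : ∀ N, A N) N‖ := by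
    have hcoe : ((x - m : lp A ∞) : ∀ N, A N) N = (x : ∀ N, A N) N - (m : ∀ N, A N) N := by
      rw [lp.coeFn_sub]; rfl
    rw [hcoe]
    simpa [add_sub_cancel] using norm_add_le ((m : ∀ N, A N) N) ((x : ∀ N, A N) N - (m : ∀ N, A N) N)
  linarith

lemma sub_mem_c0_of_rel {x y : lp A ∞} (h : (c0 A).quotientRel x y) : x - y ∈ c0 A :=
  (Submodule.quotientRel_def _).mp h

noncomputable instance : Mul (Q A) :=
  ⟨fun a b => Quotient.liftOn₂' a b (fun x y => qmk (x * y)) fun x y x' y' hx hy => by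
    refine qmk_sub_mem ?_
    have hx' : x - x' ∈ c0 A := sub_mem_c0_of_rel hx
    have hy' : y - y' ∈ c0 A := sub_mem_c0_of_rel hy
    have : x * y - x' * y' = (x - x') * y + x' * (y - y') := by
      rw [sub_mul, mul_sub]; abel
    rw [this]
    exact Submodule.add_mem _ (mul_mem_c0_right y hx') (mul_mem_c0_left x' hy')⟩

lemma qmk_mul (x y : lp A ∞) : qmk x * qmk y = qmk (x * y) := rfl

noncomputable instance : One (Q A) := ⟨qmk 1⟩

lemma qmk_one : (qmk 1 : Q A) = 1 := rfl

noncomputable instance : Pow (Q A) ℕ :=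
  ⟨fun a n => Quotient.liftOn' a (fun x => qmk (x ^ n)) fun x y h => by
    refine qmk_sub_mem ?_
    have h' : x - y ∈ c0 A := sub_mem_c0_of_rel h
    induction n with
    | zero => simpa using Submodule.zero_mem _
    | succ n ih =>
      have : x ^ (n + 1) - y ^ (n + 1) = x ^ n * (x - y) + (x ^ n - y ^ n) * y := by
        rw [pow_succ, pow_succ, mul_sub, sub_mul]; abel
      rw [this]
      exact Submodule.add_mem _ (mul_mem_c0_left (x ^ n) h') (mul_mem_c0_right y ih)⟩

lemma qmk_pow (x : lp A ∞) (n : ℕ) : (qmk x) ^ n = qmk (x ^ n) := rfl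

noncomputable instance : NatCast (Q A) := ⟨fun n => qmk n⟩
noncomputable instance : IntCast (Q A) := ⟨fun n => qmk n⟩

lemma qmk_surjective : Function.Surjective (qmk : lp A ∞ → Q A) :=
  Submodule.Quotient.mk_surjective _

lemma qmk_add (x y : lp A ∞) : qmk (x + y) = qmk x + qmk y := rfl
lemma qmk_neg (x : lp A ∞) : qmk (-x) = -qmk x := rfl
lemma qmk_sub (x y : lp A ∞) : qmk (x - y) = qmk x - qmk y :=
  Submodule.Quotient.mk_sub _
lemma qmk_smul (c : ℂ) (x : lp A ∞) : qmk (c • x) = c • qmk x := rfl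

noncomputable instance : Ring (Q A) :=
  Function.Surjective.ring qmk qmk_surjective rfl rfl (fun _ _ => rfl) (fun _ _ => rfl)
    (fun _ => rfl) (fun x y => qmk_sub x y)
    (fun n x => map_nsmul (c0 A).mkQ.toAddMonoidHom n x)
    (fun n x => map_zsmul (c0 A).mkQ.toAddMonoidHom n x)
    (fun _ _ => rfl) (fun _ => rfl) (fun _ => rfl)

noncomputable instance : Algebra ℂ (Q A) :=
  Algebra.ofModule
    (fun c a b => by
      obtain ⟨x, rfl⟩ := qmk_surjective a
      obtain ⟨y, rfl⟩ := qmk_surjective b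
      rw [← qmk_smul, qmk_mul, qmk_mul, ← qmk_smul, smul_mul_assoc])
    (fun c a b => by
      obtain ⟨x, rfl⟩ := qmk_surjective a
      obtain ⟨y, rfl⟩ := qmk_surjective b
      rw [← qmk_smul, qmk_mul, qmk_mul, ← qmk_smul, mul_smul_comm])

lemma qmk_norm_mul_le (a b : Q A) : ‖a * b‖ ≤ ‖a‖ * ‖b‖ := by
  obtain ⟨x, rfl⟩ := qmk_surjective a
  obtain ⟨y, rfl⟩ := qmk_surjective b
  refine le_of_forall_pos_le_add fun ε hε => ?_
  have hx0 : (0:ℝ) ≤ ‖qmk x‖ := norm_nonneg _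
  have hy0 : (0:ℝ) ≤ ‖qmk y‖ := norm_nonneg _
  set δ := min 1 (ε / (‖qmk x‖ + ‖qmk y‖ + 2)) with hδdef
  have hδpos : 0 < δ := lt_min one_pos (div_pos hε (by linarith))
  have key : ‖qmk (x * y)‖ ≤ (‖qmk x‖ + δ) * (‖qmk y‖ + δ) := by
    refine qmk_norm_le_of_eventually (by positivity) ?_
    filter_upwards [eventually_norm_le_qmk x hδpos, eventually_norm_le_qmk y hδpos] with N h1 h2
    have hcoe : ((x * y : lp A ∞) : ∀ N, A N) N = (x : ∀ N, A N) N * (y : ∀ N, A N) N :=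
      congrFun (lp.infty_coeFn_mul x y) N
    rw [hcoe]
    exact (norm_mul_le _ _).trans (mul_le_mul h1 h2 (norm_nonneg _) (by linarith))
  rw [qmk_mul]
  refine key.trans ?_
  have hδ1 : δ ≤ 1 := min_le_left _ _
  have hδ2 : δ * (‖qmk x‖ + ‖qmk y‖ + 2) ≤ ε := by
    rw [← le_div_iff₀ (by linarith)]
    exact min_le_right _ _
  nlinarith [hδpos.le]

noncomputable instance : NormedRing (Q A) :=
  { (inferInstance : NormedAddCommGroup (Q A)), (inferInstance : Ring (Q A)) with
    dist_eq := fun x y => by rw [dist_eq_norm, neg_add_eq_sub, norm_sub_rev]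
    norm_mul_le := qmk_norm_mul_le }

noncomputable instance : Star (Q A) :=
  ⟨fun a => Quotient.liftOn' a (fun x => qmk (star x)) fun x y h => by
    refine qmk_sub_mem ?_
    have := star_mem_c0 (sub_mem_c0_of_rel h)
    rwa [star_sub] at this⟩

lemma qmk_star (x : lp A ∞) : star (qmk x) = qmk (star x) := rfl

noncomputable instance : StarRing (Q A) where
  star_involutive a := by
    obtain ⟨x, rfl⟩ := qmk_surjective a
    rw [qmk_star, qmk_star, star_star]
  star_mul a b := by
    obtain ⟨x, rfl⟩ := qmk_surjective a
    obtain ⟨y, rfl⟩ := qmk_surjective b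
    rw [qmk_mul, qmk_star, star_mul, ← qmk_mul, qmk_star, qmk_star]
  star_add a b := by
    obtain ⟨x, rfl⟩ := qmk_surjective a
    obtain ⟨y, rfl⟩ := qmk_surjective b
    rw [← qmk_add, qmk_star, star_add, qmk_star, qmk_star, qmk_add]

instance : StarModule ℂ (Q A) where
  star_smul c a := by
    obtain ⟨x, rfl⟩ := qmk_surjective a
    rw [← qmk_smul, qmk_star, star_smul, qmk_star, qmk_smul]

instance : CStarRing (Q A) where
  norm_mul_self_le a := by
    obtain ⟨x, rfl⟩ := qmk_surjective a
    have hstar : star (qmk x) * qmk x = qmk (star x * x) := rfl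
    rw [hstar]
    refine le_of_forall_pos_le_add fun ε hε => ?_
    have hnn : (0:ℝ) ≤ ‖qmk (star x * x)‖ + ε := by positivity
    have key : ‖qmk x‖ ≤ Real.sqrt (‖qmk (star x * x)‖ + ε) := by
      refine qmk_norm_le_of_eventually (Real.sqrt_nonneg _) ?_
      filter_upwards [eventually_norm_le_qmk (star x * x) hε] with N hN
      have h1 : ((star x * x : lp A ∞) : ∀ N, A N) N
          = star ((x : ∀ N, A N) N) * (x : ∀ N, A N) N := by
        rw [congrFun (lp.infty_coeFn_mul (star x) x) N]
        show (star x : ∀ N, A N) N * (x : ∀ N, A N) N = _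
        rfl
      have h2 : ‖(x : ∀ N, A N) N‖ * ‖(x : ∀ N, A N) N‖ ≤ ‖qmk (star x * x)‖ + ε := by
        rw [← CStarRing.norm_star_mul_self, ← h1]
        exact hN
      calc ‖(x : ∀ N, A N) N‖
          = Real.sqrt (‖(x : ∀ N, A N) N‖ * ‖(x : ∀ N, A N) N‖) :=
            (Real.sqrt_mul_self (norm_nonneg _)).symm
        _ ≤ Real.sqrt (‖qmk (star x * x)‖ + ε) := Real.sqrt_le_sqrt h2
    calc ‖qmk x‖ * ‖qmk x‖
        ≤ Real.sqrt (‖qmk (star x * x)‖ + ε) * Real.sqrt (‖qmk (star x * x)‖ + ε) :=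
          mul_le_mul key key (norm_nonneg _) (Real.sqrt_nonneg _)
      _ = ‖qmk (star x * x)‖ + ε := Real.mul_self_sqrt hnn

noncomputable instance : NormedAlgebra ℂ (Q A) :=
  { (inferInstance : Algebra ℂ (Q A)) with
    norm_smul_le := norm_smul_le }

noncomputable instance : CStarAlgebra (Q A) where

lemma qmk_continuous : Continuous (qmk : lp A ∞ → Q A) :=
  AddMonoidHomClass.continuous_of_bound ((c0 A).mkQ) 1 fun x => by
    simpa using Submodule.Quotient.norm_mk_le (c0 A) x

open Filter in
theorem aux
    {M : Type*} [TopologicalSpace M] [CompactSpace M] [T2Space M]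
    (T : C(M, ℂ) →ₗ[ℂ] lp A ∞)
    (hTone : ((T 1 : lp A ∞) : ∀ N, A N) = fun N => 1)
    (hTcontr : ∀ (f : C(M, ℂ)) (N : ℕ), ‖((T f : lp A ∞) : ∀ N, A N) N‖ ≤ ‖f‖)
    (hTstar : ∀ f : C(M, ℂ), T (star f) = star (T f))
    (hTmul : ∀ f g : C(M, ℂ),
      Filter.Tendsto
        (fun N => ‖((T f : lp A ∞) : ∀ N, A N) N * ((T g : lp A ∞) : ∀ N, A N) N
          - ((T (f * g) : lp A ∞) : ∀ N, A N) N‖)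
        Filter.atTop (nhds 0)) :
    ∃ S : StarSubalgebra ℂ (lp A ∞),
      (S : Set (lp A ∞)) =
        {x : lp A ∞ | ∃ (f : C(M, ℂ)) (y : lp A ∞),
          Filter.Tendsto (fun N => ‖(y : ∀ N, A N) N‖) Filter.atTop (nhds 0)
            ∧ x = T f + y} ∧
      IsClosed (S : Set (lp A ∞)) := by
  classical
  have hT1 : T 1 = (1 : lp A ∞) := lp.ext (by rw [hTone]; rfl)
  have hmulmem : ∀ f g : C(M, ℂ), T f * T g - T (f * g) ∈ c0 A := by
    intro f g
    rw [mem_c0_iff]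
    have hc : ∀ N, ((T f * T g - T (f * g) : lp A ∞) : ∀ N, A N) N
        = ((T f : lp A ∞) : ∀ N, A N) N * ((T g : lp A ∞) : ∀ N, A N) N
          - ((T (f * g) : lp A ∞) : ∀ N, A N) N := by
      intro N
      rw [lp.coeFn_sub, Pi.sub_apply, congrFun (lp.infty_coeFn_mul (T f) (T g)) N]
      rfl
    simp only [hc]
    exact hTmul f g
  -- the star algebra homomorphism ψ : C(M,ℂ) → Q A
  let ψ : C(M, ℂ) →⋆ₐ[ℂ] Q A :=
  { toFun := fun f => qmk (T f)
    map_one' := by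
      show qmk (T 1) = 1
      rw [hT1]; rfl
    map_mul' := fun f g => by
      show qmk (T (f * g)) = qmk (T f) * qmk (T g)
      rw [qmk_mul]
      exact (qmk_sub_mem (hmulmem f g)).symm
    map_zero' := by
      show qmk (T 0) = 0
      rw [map_zero]; rfl
    map_add' := fun f g => by
      show qmk (T (f + g)) = qmk (T f) + qmk (T g)
      rw [map_add, qmk_add]
    commutes' := fun c => by
      show qmk (T (algebraMap ℂ C(M, ℂ) c)) = algebraMap ℂ (Q A) c
      rw [Algebra.algebraMap_eq_smul_one, Algebra.algebraMap_eq_smul_one, map_smul, hT1,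
        ← qmk_one, qmk_smul]
    map_star' := fun f => by
      show qmk (T (star f)) = star (qmk (T f))
      rw [hTstar, qmk_star] }
  have hψ : ∀ f, ψ f = qmk (T f) := fun f => rfl
  have hψnorm : ∀ f, ‖ψ f‖ ≤ ‖f‖ := fun f =>
    (Submodule.Quotient.norm_mk_le (c0 A) (T f)).trans
      (lp.norm_le_of_forall_le (norm_nonneg f) (hTcontr f))
  have hψcont : Continuous ψ :=
    AddMonoidHomClass.continuous_of_bound ψ 1 (by simpa using hψnorm)
  set J : Ideal C(M, ℂ) := RingHom.ker ψ with hJ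
  have hJclosed : IsClosed (J : Set C(M, ℂ)) := by
    have : (J : Set C(M, ℂ)) = (fun f => ψ f) ⁻¹' {0} := by
      ext f
      simp [hJ, RingHom.mem_ker]
    rw [this]
    exact isClosed_singleton.preimage hψcont
  set K : Set M := (ContinuousMap.setOfIdeal J)ᶜ with hK
  have hKclosed : IsClosed K := (ContinuousMap.setOfIdeal_open J).isClosed_compl
  haveI : CompactSpace K := isCompact_iff_compactSpace.mp (hKclosed.isCompact)
  have hJ_vanish : ∀ f ∈ J, ∀ x : M, x ∈ K → f x = 0 := fun f hf x hx =>
    ContinuousMap.notMem_setOfIdeal.mp hx hf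
  have hvanish_J : ∀ f : C(M, ℂ), (∀ x ∈ K, f x = 0) → f ∈ J := by
    intro f hf
    have h1 : f ∈ ContinuousMap.idealOfSet ℂ (ContinuousMap.setOfIdeal J) :=
      ContinuousMap.mem_idealOfSet.mpr fun x hx => hf x hx
    rwa [ContinuousMap.idealOfSet_ofIdeal_eq_closure, Ideal.closure_eq_of_isClosed J hJclosed]
      at h1
  have hψeq : ∀ f g : C(M, ℂ), (∀ x ∈ K, f x = g x) → ψ f = ψ g := by
    intro f g h
    have hmem : f - g ∈ J := hvanish_J _ fun x hx => by
      simp only [ContinuousMap.sub_apply]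
      rw [h x hx, sub_self]
    have h0 : ψ (f - g) = 0 := RingHom.mem_ker.mp hmem
    rw [map_sub] at h0
    exact sub_eq_zero.mp h0
  -- extension operator via Tietze
  let E : C(K, ℂ) → C(M, ℂ) := fun g => (ContinuousMap.exists_restrict_eq hKclosed g).choose
  have hE : ∀ g : C(K, ℂ), (E g).restrict K = g := fun g =>
    (ContinuousMap.exists_restrict_eq hKclosed g).choose_spec
  have hEeval : ∀ (g : C(K, ℂ)) (x : K), E g x = g x := by
    intro g x
    have := congrArg (fun u : C(K, ℂ) => u x) (hE g)
    simpa [ContinuousMap.restrict_apply] using this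
  -- the induced injective star algebra homomorphism φ : C(K,ℂ) → Q A
  let φ : C(K, ℂ) →⋆ₐ[ℂ] Q A :=
  { toFun := fun g => ψ (E g)
    map_one' := by
      show ψ (E 1) = 1
      have h1 : ψ (E 1) = ψ 1 := hψeq _ _ fun x hx => by
        rw [hEeval 1 ⟨x, hx⟩]; rfl
      rw [h1, map_one]
    map_mul' := fun g₁ g₂ => by
      show ψ (E (g₁ * g₂)) = ψ (E g₁) * ψ (E g₂)
      have h1 : ψ (E (g₁ * g₂)) = ψ (E g₁ * E g₂) := hψeq _ _ fun x hx => by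
        rw [hEeval (g₁ * g₂) ⟨x, hx⟩, ContinuousMap.mul_apply, ContinuousMap.mul_apply,
          hEeval g₁ ⟨x, hx⟩, hEeval g₂ ⟨x, hx⟩]
      rw [h1, map_mul]
    map_zero' := by
      show ψ (E 0) = 0
      have h1 : ψ (E 0) = ψ 0 := hψeq _ _ fun x hx => by
        rw [hEeval 0 ⟨x, hx⟩]; rfl
      rw [h1, map_zero]
    map_add' := fun g₁ g₂ => by
      show ψ (E (g₁ + g₂)) = ψ (E g₁) + ψ (E g₂)
      have h1 : ψ (E (g₁ + g₂)) = ψ (E g₁ + E g₂) := hψeq _ _ fun x hx => by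
        rw [hEeval (g₁ + g₂) ⟨x, hx⟩, ContinuousMap.add_apply, ContinuousMap.add_apply,
          hEeval g₁ ⟨x, hx⟩, hEeval g₂ ⟨x, hx⟩]
      rw [h1, map_add]
    commutes' := fun c => by
      show ψ (E (algebraMap ℂ C(K, ℂ) c)) = algebraMap ℂ (Q A) c
      have h1 : ψ (E (algebraMap ℂ C(K, ℂ) c)) = ψ (algebraMap ℂ C(M, ℂ) c) :=
        hψeq _ _ fun x hx => by
          rw [hEeval (algebraMap ℂ C(K, ℂ) c) ⟨x, hx⟩]
          simp [Algebra.algebraMap_eq_smul_one]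
      rw [h1, AlgHomClass.commutes]
    map_star' := fun g => by
      show ψ (E (star g)) = star (ψ (E g))
      have h1 : ψ (E (star g)) = ψ (star (E g)) := hψeq _ _ fun x hx => by
        rw [hEeval (star g) ⟨x, hx⟩, ContinuousMap.star_apply, ContinuousMap.star_apply,
          hEeval g ⟨x, hx⟩]
      rw [h1, map_star] }
  have hφ : ∀ g, φ g = ψ (E g) := fun g => rfl
  have hφρ : ∀ f : C(M, ℂ), φ (f.restrict K) = ψ f := by
    intro f
    refine hψeq _ _ fun x hx => ?_
    rw [hEeval (f.restrict K) ⟨x, hx⟩]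
    rfl
  have hφinj : Function.Injective φ := by
    intro g₁ g₂ h
    have hker : ψ (E g₁ - E g₂) = 0 := by
      rw [map_sub]
      exact sub_eq_zero.mpr h
    have hmem : E g₁ - E g₂ ∈ J := RingHom.mem_ker.mpr hker
    ext x
    have h0 := hJ_vanish _ hmem x x.2
    rw [ContinuousMap.sub_apply] at h0
    have h1 := sub_eq_zero.mp h0
    have h2 : (⟨(x : M), x.2⟩ : K) = x := rfl
    rw [← hEeval g₁ x, ← hEeval g₂ x]
    exact h1
  have hiso : Isometry φ := NonUnitalStarAlgHom.isometry φ hφinj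
  have hclosedrange : IsClosed (Set.range φ) := hiso.isClosedEmbedding.isClosed_range
  have hrange : Set.range (fun f => ψ f) = Set.range (fun g => φ g) := by
    apply Set.Subset.antisymm
    · rintro - ⟨f, rfl⟩
      exact ⟨f.restrict K, hφρ f⟩
    · rintro - ⟨g, rfl⟩
      exact ⟨E g, rfl⟩
  -- the star subalgebra
  let S : StarSubalgebra ℂ (lp A ∞) :=
  { carrier := {x : lp A ∞ | ∃ f : C(M, ℂ), x - T f ∈ c0 A}
    mul_mem' := by
      rintro x y ⟨f, hf⟩ ⟨g, hg⟩
      refine ⟨f * g, ?_⟩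
      have hsplit : x * y - T (f * g)
          = (x - T f) * y + T f * (y - T g) + (T f * T g - T (f * g)) := by
        rw [sub_mul, mul_sub]
        abel
      rw [hsplit]
      exact Submodule.add_mem _
        (Submodule.add_mem _ (mul_mem_c0_right y hf) (mul_mem_c0_left (T f) hg)) (hmulmem f g)
    one_mem' := ⟨1, by rw [hT1, sub_self]; exact Submodule.zero_mem _⟩
    add_mem' := by
      rintro x y ⟨f, hf⟩ ⟨g, hg⟩
      refine ⟨f + g, ?_⟩
      have hsplit : x + y - T (f + g) = (x - T f) + (y - T g) := by
        rw [map_add]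
        abel
      rw [hsplit]
      exact Submodule.add_mem _ hf hg
    zero_mem' := ⟨0, by rw [map_zero, sub_self]; exact Submodule.zero_mem _⟩
    algebraMap_mem' := fun c => by
      refine ⟨algebraMap ℂ C(M, ℂ) c, ?_⟩
      have h1 : T (algebraMap ℂ C(M, ℂ) c) = algebraMap ℂ (lp A ∞) c := by
        rw [Algebra.algebraMap_eq_smul_one, Algebra.algebraMap_eq_smul_one, map_smul, hT1]
      rw [h1, sub_self]
      exact Submodule.zero_mem _
    star_mem' := by
      rintro x ⟨f, hf⟩
      refine ⟨star f, ?_⟩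
      rw [hTstar, ← star_sub]
      exact star_mem_c0 hf }
  have hScarrier : (S : Set (lp A ∞)) = {x : lp A ∞ | ∃ f : C(M, ℂ), x - T f ∈ c0 A} := rfl
  refine ⟨S, ?_, ?_⟩
  · rw [hScarrier]
    ext x
    constructor
    · rintro ⟨f, hf⟩
      exact ⟨f, x - T f, mem_c0_iff.mp hf, by abel⟩
    · rintro ⟨f, y, hy, rfl⟩
      refine ⟨f, ?_⟩
      have : T f + y - T f = y := by abel
      rw [this]
      exact mem_c0_iff.mpr hy
  · have hSpre : (S : Set (lp A ∞)) = qmk ⁻¹' Set.range (fun g => φ g) := by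
      rw [hScarrier, ← hrange]
      ext x
      constructor
      · rintro ⟨f, hf⟩
        exact ⟨f, (qmk_sub_mem hf).symm⟩
      · rintro ⟨f, hf⟩
        exact ⟨f, (Submodule.Quotient.eq (c0 A)).mp hf.symm⟩
    rw [hSpre]
    exact hclosedrange.preimage qmk_continuous

end ToeplitzAux

open WeakDual in
/-- Toeplitz-type quantization: if `T_N : C(M) → A_N` are unital norm-contracting linear maps
(the components of `T`) which are asymptotically multiplicative and star-preserving, then
`A := Im T + ⊕_N A_N` (sum of the image of `T` and the c₀-direct sum inside the bounded
product `∏_N A_N`) is a (closed, star-closed) C*-subalgebra of `∏_N A_N`. -/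
theorem toeplitz_image_plus_compacts_is_cstar_subalgebra
    {M : Type*} [TopologicalSpace M] [CompactSpace M]
    {A : ℕ → Type*} [∀ N, NormedRing (A N)] [∀ N, StarRing (A N)]
    [∀ N, CStarRing (A N)] [∀ N, NormedAlgebra ℂ (A N)] [∀ N, CompleteSpace (A N)]
    [∀ N, StarModule ℂ (A N)] [∀ N, NormOneClass (A N)]
    (T : C(M, ℂ) →ₗ[ℂ] lp A ∞)
    (hTone : ((T 1 : lp A ∞) : ∀ N, A N) = fun N => 1)
    (hTcontr : ∀ (f : C(M, ℂ)) (N : ℕ), ‖((T f : lp A ∞) : ∀ N, A N) N‖ ≤ ‖f‖)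
    (hTstar : ∀ f : C(M, ℂ), T (star f) = star (T f))
    (hTmul : ∀ f g : C(M, ℂ),
      Filter.Tendsto
        (fun N => ‖((T f : lp A ∞) : ∀ N, A N) N * ((T g : lp A ∞) : ∀ N, A N) N
          - ((T (f * g) : lp A ∞) : ∀ N, A N) N‖)
        Filter.atTop (nhds 0)) :
    ∃ S : StarSubalgebra ℂ (lp A ∞),
      (S : Set (lp A ∞)) =
        {x : lp A ∞ | ∃ (f : C(M, ℂ)) (y : lp A ∞),
          Filter.Tendsto (fun N => ‖(y : ∀ N, A N) N‖) Filter.atTop (nhds 0)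
            ∧ x = T f + y} ∧
      IsClosed (S : Set (lp A ∞)) := by
  classical
  let e := gelfandStarTransform C(M, ℂ)
  have hcoe : (⇑e : C(M, ℂ) → _) = ⇑(gelfandTransform ℂ C(M, ℂ)) := rfl
  have he : ∀ f : C(M, ℂ), ‖e f‖ = ‖f‖ := fun f => by
    rw [show e f = gelfandTransform ℂ C(M, ℂ) f from congrFun hcoe f]
    exact (gelfandTransform_isometry C(M, ℂ)).norm_map_of_map_zero (map_zero _) f
  have hesymm : ∀ g, ‖e.symm g‖ = ‖g‖ := fun g => by
    rw [← he (e.symm g), e.apply_symm_apply]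
  let T' : C(characterSpace ℂ C(M, ℂ), ℂ) →ₗ[ℂ] lp A ∞ :=
  { toFun := fun g => T (e.symm g)
    map_add' := fun g₁ g₂ => by
      show T (e.symm (g₁ + g₂)) = T (e.symm g₁) + T (e.symm g₂)
      rw [map_add, map_add]
    map_smul' := fun c g => by
      show T (e.symm (c • g)) = (RingHom.id ℂ) c • T (e.symm g)
      rw [map_smul, map_smul]
      rfl }
  have hT' : ∀ g, T' g = T (e.symm g) := fun g => rfl
  have h1' : ((T' 1 : lp A ∞) : ∀ N, A N) = fun N => 1 := by
    have : T' (1 : C(characterSpace ℂ C(M, ℂ), ℂ)) = T 1 := by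
      rw [hT', map_one]
    rw [this]
    exact hTone
  have hcontr' : ∀ (g : C(characterSpace ℂ C(M, ℂ), ℂ)) (N : ℕ),
      ‖((T' g : lp A ∞) : ∀ N, A N) N‖ ≤ ‖g‖ := fun g N => by
    rw [hT']
    exact (hTcontr (e.symm g) N).trans (le_of_eq (hesymm g))
  have hstar' : ∀ g, T' (star g) = star (T' g) := fun g => by
    rw [hT', hT', map_star, hTstar]
  have hmul' : ∀ g₁ g₂ : C(characterSpace ℂ C(M, ℂ), ℂ),
      Filter.Tendsto
        (fun N => ‖((T' g₁ : lp A ∞) : ∀ N, A N) N * ((T' g₂ : lp A ∞) : ∀ N, A N) N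
          - ((T' (g₁ * g₂) : lp A ∞) : ∀ N, A N) N‖)
        Filter.atTop (nhds 0) := fun g₁ g₂ => by
    have hmm : e.symm (g₁ * g₂) = e.symm g₁ * e.symm g₂ := map_mul _ _ _
    simp only [hT', hmm]
    exact hTmul (e.symm g₁) (e.symm g₂)
  obtain ⟨S, hS1, hS2⟩ := ToeplitzAux.aux T' h1' hcontr' hstar' hmul'
  refine ⟨S, ?_, hS2⟩
  rw [hS1]
  ext x
  constructor
  · rintro ⟨g, y, hy, rfl⟩
    exact ⟨e.symm g, y, hy, by rw [hT']⟩
  · rintro ⟨f, y, hy, rfl⟩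
    exact ⟨e f, y, hy, by rw [hT', e.symm_apply_apply]⟩
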